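/- Let φ : R → R be measurable and non-singular. Then φ is strictly non-singular (μ(E) = 0 iff μ(φ⁻¹(E)) = 0) if and only if the composition operator T_φ is injective on equivalence classes of measurable functions. -/
import Mathlib


open MeasureTheory

/-- Let `φ` be measurable and non-singular. Then `φ` is strictly non-singular
(`μ(E) = 0 ↔ μ(φ⁻¹(E)) = 0`) if and only if the composition operator `f ↦ f ∘ φ`
is injective on μ-a.e. equivalence classes of measurable functions. -/
theorem strictlyNonsingular_iff_comp_injective {α : Type*} [MeasurableSpace α]
    (μ : Measure α) [SigmaFinite μ] (φ : α → α) (hφ : Measurable φ)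
    (hns : ∀ E : Set α, MeasurableSet E → μ E = 0 → μ (φ ⁻¹' E) = 0) :
    (∀ E : Set α, MeasurableSet E → (μ E = 0 ↔ μ (φ ⁻¹' E) = 0)) ↔
      (∀ f g : α → ℝ, Measurable f → Measurable g →
        (f ∘ φ) =ᵐ[μ] (g ∘ φ) → f =ᵐ[μ] g) := by
  constructor
  · intro h f g hf hg hfg
    rw [Filter.EventuallyEq, ae_iff] at hfg ⊢
    have hE : MeasurableSet {x | ¬ f x = g x} := (measurableSet_eq_fun hf hg).compl
    exact (h _ hE).mpr hfg
  · intro h E hE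
    refine ⟨hns E hE, fun hpre => ?_⟩
    have key := h (E.indicator 1) 0 (measurable_one.indicator hE) measurable_const ?_
    · rw [Filter.EventuallyEq, ae_iff] at key
      refine measure_mono_null (fun x hx => ?_) key
      simpa [Set.indicator_of_mem hx] using hx
    · rw [Filter.EventuallyEq, ae_iff]
      refine measure_mono_null (fun x hx => ?_) hpre
      by_contra hmem
      exact hx (Set.indicator_of_notMem hmem 1)
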